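/- Let y¹, y², y³ ∈ ℝⁿ and p ∈ ℝ³, x̃¹, x̃², x̃³ ∈ ℝ³ with ‖x̃ⁱ − x̃ʲ‖ ≥ ‖yⁱ − yʲ‖ for all i, j. Then there exists q ∈ ℝⁿ with ‖q − yⁱ‖ ≤ ‖p − x̃ⁱ‖ for all i. -/

import Mathlib

open Set Metric

open RealInnerProductSpace in
private lemma sum_smul_sub_center {E : Type*} [NormedAddCommGroup E] [InnerProductSpace ℝ E]
    {ι : Type*} [Fintype ι] (l : ι → ℝ) (hl : ∑ i, l i = 1) (y : ι → E) :
    ∑ i, l i • ((∑ j, l j • y j) - y i) = 0 := by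
  simp only [smul_sub, Finset.sum_sub_distrib, ← Finset.sum_smul, hl, one_smul, sub_self]

open RealInnerProductSpace in
private lemma parallel_axis {E : Type*} [NormedAddCommGroup E] [InnerProductSpace ℝ E]
    {ι : Type*} [Fintype ι] (l : ι → ℝ) (hl : ∑ i, l i = 1) (y : ι → E) (z : E) :
    ∑ i, l i * ‖z - y i‖ ^ 2
      = ‖z - ∑ j, l j • y j‖ ^ 2 + ∑ i, l i * ‖(∑ j, l j • y j) - y i‖ ^ 2 := by
  set b : E := ∑ j, l j • y j with hbdef
  have key : ∀ i, ‖z - y i‖ ^ 2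
      = ‖z - b‖ ^ 2 + 2 * ⟪z - b, b - y i⟫ + ‖b - y i‖ ^ 2 := by
    intro i
    have hz : z - y i = (z - b) + (b - y i) := by abel
    rw [hz, norm_add_sq_real]
  calc ∑ i, l i * ‖z - y i‖ ^ 2
      = ∑ i, (l i * ‖z - b‖ ^ 2 + (2 * ⟪z - b, l i • (b - y i)⟫ + l i * ‖b - y i‖ ^ 2)) := by
        refine Finset.sum_congr rfl fun i _ => ?_
        rw [key i, real_inner_smul_right]; ring
    _ = (∑ i, l i) * ‖z - b‖ ^ 2
        + (2 * ⟪z - b, ∑ i, l i • (b - y i)⟫ + ∑ i, l i * ‖b - y i‖ ^ 2) := by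
        rw [Finset.sum_add_distrib, Finset.sum_add_distrib, ← Finset.sum_mul, inner_sum,
          ← Finset.mul_sum]
    _ = ‖z - b‖ ^ 2 + ∑ i, l i * ‖b - y i‖ ^ 2 := by
        rw [hl, sum_smul_sub_center l hl y, inner_zero_right]
        ring

private lemma variance_identity {E : Type*} [NormedAddCommGroup E] [InnerProductSpace ℝ E]
    {ι : Type*} [Fintype ι] (l : ι → ℝ) (hl : ∑ i, l i = 1) (y : ι → E) :
    ∑ i, ∑ j, l i * l j * ‖y i - y j‖ ^ 2
      = 2 * ∑ i, l i * ‖(∑ j, l j • y j) - y i‖ ^ 2 := by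
  set b : E := ∑ j, l j • y j with hbdef
  calc ∑ i, ∑ j, l i * l j * ‖y i - y j‖ ^ 2
      = ∑ i, l i * (∑ j, l j * ‖y i - y j‖ ^ 2) := by
        refine Finset.sum_congr rfl fun i _ => ?_
        rw [Finset.mul_sum]
        exact Finset.sum_congr rfl fun j _ => by ring
    _ = ∑ i, l i * (‖y i - b‖ ^ 2 + ∑ k, l k * ‖b - y k‖ ^ 2) := by
        refine Finset.sum_congr rfl fun i _ => ?_
        rw [parallel_axis l hl y (y i)]
    _ = ∑ i, l i * ‖b - y i‖ ^ 2 + (∑ i, l i) * ∑ k, l k * ‖b - y k‖ ^ 2 := by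
        have hstep : ∀ i, l i * (‖y i - b‖ ^ 2 + ∑ k, l k * ‖b - y k‖ ^ 2)
            = l i * ‖b - y i‖ ^ 2 + l i * ∑ k, l k * ‖b - y k‖ ^ 2 := by
          intro i; rw [norm_sub_rev]; ring
        rw [Finset.sum_congr rfl fun i _ => hstep i, Finset.sum_add_distrib, ← Finset.sum_mul]
    _ = 2 * ∑ i, l i * ‖b - y i‖ ^ 2 := by rw [hl]; ring

theorem finite_plus_one_euclidean (n : ℕ)
    (y : Fin 3 → EuclideanSpace ℝ (Fin n))
    (p : EuclideanSpace ℝ (Fin 3)) (xt : Fin 3 → EuclideanSpace ℝ (Fin 3))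
    (h : ∀ i j, dist (y i) (y j) ≤ dist (xt i) (xt j)) :
    ∃ q : EuclideanSpace ℝ (Fin n), ∀ i, dist q (y i) ≤ dist p (xt i) := by
  classical
  set r : Fin 3 → ℝ := fun i => dist p (xt i) with hrdef
  set H : (Fin 3 → ℝ) → ℝ :=
    fun l => ∑ i, l i * (‖(∑ j, l j • y j) - y i‖ ^ 2 - r i ^ 2) with hHdef
  -- H is nonpositive on the standard simplex
  have hH_nonpos : ∀ l ∈ stdSimplex ℝ (Fin 3), H l ≤ 0 := by
    intro l hlmem
    obtain ⟨hl0, hl1⟩ := hlmem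
    have hsplit : H l = (∑ i, l i * ‖(∑ j, l j • y j) - y i‖ ^ 2) - ∑ i, l i * r i ^ 2 := by
      rw [hHdef, ← Finset.sum_sub_distrib]
      exact Finset.sum_congr rfl fun i _ => by ring
    have hvar_y := variance_identity l hl1 y
    have hvar_x := variance_identity l hl1 xt
    have hterm : ∑ i, ∑ j, l i * l j * ‖y i - y j‖ ^ 2
        ≤ ∑ i, ∑ j, l i * l j * ‖xt i - xt j‖ ^ 2 := by
      refine Finset.sum_le_sum fun i _ => Finset.sum_le_sum fun j _ => ?_
      have hd := h i j
      rw [dist_eq_norm, dist_eq_norm] at hd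
      have := pow_le_pow_left₀ (norm_nonneg _) hd 2
      nlinarith [mul_nonneg (hl0 i) (hl0 j)]
    have hpa := parallel_axis l hl1 xt p
    have hpr : ∑ i, l i * r i ^ 2 = ∑ i, l i * ‖p - xt i‖ ^ 2 := by
      refine Finset.sum_congr rfl fun i _ => ?_
      simp only [hrdef, dist_eq_norm]
    nlinarith [sq_nonneg ‖p - ∑ j, l j • xt j‖]
  -- maximizer of H on the simplex
  have hcont : Continuous H := by
    rw [hHdef]
    refine continuous_finset_sum _ fun i _ => Continuous.mul (continuous_apply i) ?_
    refine Continuous.sub ?_ continuous_const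
    refine Continuous.pow ?_ 2
    refine Continuous.norm ?_
    refine Continuous.sub ?_ continuous_const
    exact continuous_finset_sum _ fun j _ => (continuous_apply j).smul continuous_const
  have hne : (stdSimplex ℝ (Fin 3)).Nonempty := ⟨fun _ => 1/3, fun _ => by norm_num, by simp⟩
  obtain ⟨l, hlmem, hmax⟩ :=
    (isCompact_stdSimplex ℝ (Fin 3)).exists_isMaxOn hne hcont.continuousOn
  obtain ⟨hl0, hl1⟩ := hlmem
  set q : EuclideanSpace ℝ (Fin n) := ∑ j, l j • y j with hqdef
  have hHl_eq : H l = ∑ j, l j * (‖q - y j‖ ^ 2 - r j ^ 2) := by rw [hHdef]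
  refine ⟨q, fun i => ?_⟩
  -- key claim: ‖q - y i‖^2 - r i^2 ≤ H l
  have hclaim : ‖q - y i‖ ^ 2 - r i ^ 2 ≤ H l := by
    set a : ℝ := ‖q - y i‖ ^ 2 - r i ^ 2 with hadef
    set v : EuclideanSpace ℝ (Fin n) := y i - q with hvdef
    set c : ℝ := ‖v‖ ^ 2 with hcdef
    have hc0 : 0 ≤ c := sq_nonneg _
    -- for every t ∈ (0,1], a ≤ H l + t * c
    have hstep : ∀ t : ℝ, 0 < t → t ≤ 1 → a ≤ H l + t * c := by
      intro t ht0 ht1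
      set m : Fin 3 → ℝ := fun j => (1 - t) * l j + t * (if j = i then 1 else 0) with hmdef
      have hm0 : ∀ j, 0 ≤ m j := by
        intro j
        have := hl0 j
        simp only [hmdef]
        split <;> nlinarith
      have hm1 : ∑ j, m j = 1 := by
        simp only [hmdef, Finset.sum_add_distrib, ← Finset.mul_sum, hl1,
          Finset.sum_ite_eq', Finset.mem_univ, if_true]
        ring
      have hbm : (∑ j, m j • y j) = q + t • v := by
        have hpt : ∀ j, m j • y j
            = (1 - t) • (l j • y j) + t • ((if j = i then 1 else 0 : ℝ) • y j) := by
          intro j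
          simp only [hmdef]
          rw [add_smul, mul_smul, mul_smul]
        rw [Finset.sum_congr rfl fun j _ => hpt j, Finset.sum_add_distrib,
          ← Finset.smul_sum, ← Finset.smul_sum]
        have h2 : (∑ j, (if j = i then 1 else 0 : ℝ) • y j) = y i := by
          simp [ite_smul]
        rw [h2, ← hqdef, hvdef, smul_sub, sub_smul, one_smul]
        abel
      -- expansion of H m
      have hexp : H m = (1 - t) * H l + t * a - t ^ 2 * c := by
        have hnorm : ∀ j, ‖(∑ k, m k • y k) - y j‖ ^ 2
            = ‖q - y j‖ ^ 2 + 2 * (t * (inner ℝ (q - y j) v : ℝ)) + t ^ 2 * c := by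
          intro j
          rw [hbm]
          have hz : q + t • v - y j = (q - y j) + t • v := by abel
          rw [hz, norm_add_sq_real, real_inner_smul_right, norm_smul, hcdef]
          simp [mul_pow, sq_abs, Real.norm_eq_abs]
        have hHm : H m = ∑ j, m j * (‖q - y j‖ ^ 2 - r j ^ 2)
            + 2 * t * (∑ j, m j * (inner ℝ (q - y j) v : ℝ)) + t ^ 2 * c * (∑ j, m j) := by
          rw [hHdef]
          simp only []
          rw [Finset.sum_congr rfl fun j _ => by rw [hnorm j]]
          rw [Finset.mul_sum, Finset.mul_sum, ← Finset.sum_add_distrib,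
            ← Finset.sum_add_distrib]
          exact Finset.sum_congr rfl fun j _ => by ring
        have hinner : (∑ j, m j * (inner ℝ (q - y j) v : ℝ)) = -(t * c) := by
          have hsi : (∑ j, m j * (inner ℝ (q - y j) v : ℝ))
              = (inner ℝ (∑ j, m j • (q - y j)) v : ℝ) := by
            rw [sum_inner]
            exact Finset.sum_congr rfl fun j _ => by rw [real_inner_smul_left]
          rw [hsi]
          have hsum : (∑ j, m j • (q - y j)) = -(t • v) := by
            simp only [smul_sub, Finset.sum_sub_distrib, ← Finset.sum_smul, hm1, one_smul, hbm]
            abel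
          rw [hsum, inner_neg_left, real_inner_smul_left, real_inner_self_eq_norm_sq, ← hcdef]
        have hfirst : ∑ j, m j * (‖q - y j‖ ^ 2 - r j ^ 2) = (1 - t) * H l + t * a := by
          have : ∀ j, m j * (‖q - y j‖ ^ 2 - r j ^ 2)
              = (1 - t) * (l j * (‖q - y j‖ ^ 2 - r j ^ 2))
                + t * ((if j = i then 1 else 0 : ℝ) * (‖q - y j‖ ^ 2 - r j ^ 2)) := by
            intro j; simp only [hmdef]; ring
          rw [Finset.sum_congr rfl fun j _ => this j, Finset.sum_add_distrib,
            ← Finset.mul_sum, ← Finset.mul_sum, ← hHl_eq]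
          congr 1
          simp [ite_mul, hadef]
        rw [hHm, hinner, hfirst, hm1]
        ring
      have hle : H m ≤ H l := hmax ⟨hm0, hm1⟩
      rw [hexp] at hle
      have hre : t * a ≤ t * (H l + t * c) := by ring_nf; ring_nf at hle; nlinarith
      exact le_of_mul_le_mul_left hre ht0
    by_contra hcon
    push_neg at hcon
    set ε : ℝ := a - H l with heps
    have hε : 0 < ε := by rw [heps]; linarith
    have ht0 : (0:ℝ) < min 1 (ε / (2 * (c + 1))) := by positivity
    have ht1 : min 1 (ε / (2 * (c + 1))) ≤ 1 := min_le_left _ _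
    have hst := hstep _ ht0 ht1
    have htc : min 1 (ε / (2 * (c + 1))) * c ≤ (ε / (2 * (c + 1))) * c :=
      mul_le_mul_of_nonneg_right (min_le_right _ _) hc0
    have hfin : ε ≤ (ε / (2 * (c + 1))) * c := by rw [heps]; linarith
    rw [div_mul_eq_mul_div, le_div_iff₀ (by linarith : (0:ℝ) < 2 * (c + 1))] at hfin
    nlinarith
  have hHl := hH_nonpos l ⟨hl0, hl1⟩
  have hsq : ‖q - y i‖ ^ 2 ≤ r i ^ 2 := by linarith
  have hr0 : 0 ≤ r i := dist_nonneg
  have hle : ‖q - y i‖ ≤ r i := by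
    have h1 := Real.sqrt_le_sqrt hsq
    rwa [Real.sqrt_sq (norm_nonneg _), Real.sqrt_sq hr0] at h1
  rw [dist_eq_norm]
  exact hle
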